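/- arXiv:2106.11675 — 2 statements merged into one kernel-verified Lean document; each statement's English description precedes it below -/
import Mathlib

section
/- Let G be a finite simple graph, let z ≥ 0 be an integer, let (C₁,F₁) be a z-antler in G, and let (C₂,F₂) be an antler in G. Then (C₁ \ (C₂ ∪ F₂), F₁ \ (C₂ ∪ F₂)) is a z-antler in the graph G − (C₂ ∪ F₂). -/
variable {V : Type*}

/-- The subgraph of `G` with edges restricted to the vertex set `S`
(kept on the same vertex type; vertices outside `S` become isolated).
Used to model the induced subgraph `G[S]` and vertex deletion `G - X = G[Xᶜ]`. -/
def graphRestrict (G : SimpleGraph V) (S : Set V) : SimpleGraph V where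
  Adj u v := G.Adj u v ∧ u ∈ S ∧ v ∈ S
  symm := ⟨fun _ _ h => ⟨h.1.symm, h.2.2, h.2.1⟩⟩
  loopless := ⟨fun v h => G.loopless.irrefl v h.1⟩

/-- `X` is a feedback vertex set of `G`: deleting `X` leaves an acyclic graph. -/
def IsFVS (G : SimpleGraph V) (X : Set V) : Prop :=
  (graphRestrict G Xᶜ).IsAcyclic

/-- The feedback vertex number of `G`: the minimum size of a feedback vertex set. -/
noncomputable def fvs (G : SimpleGraph V) : ℕ :=
  sInf {n | ∃ X : Set V, IsFVS G X ∧ X.ncard = n}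

/-- `X` is a minimum feedback vertex set of `G`. -/
def IsMinFVS (G : SimpleGraph V) (X : Set V) : Prop :=
  IsFVS G X ∧ ∀ Y : Set V, IsFVS G Y → X.ncard ≤ Y.ncard

/-- `(C, F)` is a feedback vertex cut in `G`: `C` and `F` are disjoint, `G[F]` is a
forest, and every tree of `G[F]` has at most one edge to `V(G) \ (C ∪ F)` (i.e. any two
edges from the same component of `G[F]` to the outside coincide). -/
def IsFVC (G : SimpleGraph V) (C F : Set V) : Prop :=
  Disjoint C F ∧ (graphRestrict G F).IsAcyclic ∧
    ∀ u₁ u₂ w₁ w₂ : V, u₁ ∈ F → u₂ ∈ F →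
      (graphRestrict G F).Reachable u₁ u₂ →
      w₁ ∉ C ∪ F → w₂ ∉ C ∪ F → G.Adj u₁ w₁ → G.Adj u₂ w₂ →
      u₁ = u₂ ∧ w₁ = w₂

/-- `(C, F)` is an antler in `G`: a feedback vertex cut with `|C| ≤ fvs(G[C ∪ F])`. -/
def IsAntler (G : SimpleGraph V) (C F : Set V) : Prop :=
  IsFVC G C F ∧ C.ncard ≤ fvs (graphRestrict G (C ∪ F))

/-- A graph `H` together with a vertex set `C` "has order `z`" if every connected
component `H'` of `H` satisfies `fvs(H') = |C ∩ V(H')| ≤ z`. -/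
def HasCertOrder {W : Type*} (H : SimpleGraph W) (C : Set W) (z : ℕ) : Prop :=
  ∀ v : W,
    fvs (graphRestrict H {u | H.Reachable u v}) = (C ∩ {u | H.Reachable u v}).ncard ∧
    (C ∩ {u | H.Reachable u v}).ncard ≤ z

/-- `H` is a `C`-certificate in `G`: a subgraph of `G` for which `C` is a minimum
feedback vertex set. -/
def IsCCertificate (G : SimpleGraph V) (C : Set V) (H : G.Subgraph) : Prop :=
  C ⊆ H.verts ∧ IsMinFVS H.coe {u : H.verts | (u : V) ∈ C}

/-- `H` is a `C`-certificate of order `z` in `G`. -/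
def IsCCertificateOfOrder (G : SimpleGraph V) (C : Set V) (H : G.Subgraph) (z : ℕ) : Prop :=
  IsCCertificate G C H ∧ HasCertOrder H.coe {u : H.verts | (u : V) ∈ C} z

/-- `(C, F)` is a `z`-antler in `G`: an antler such that `G[C ∪ F]` contains a
`C`-certificate of order `z`. -/
def IsZAntler (G : SimpleGraph V) (z : ℕ) (C F : Set V) : Prop :=
  IsAntler G C F ∧ ∃ H : G.Subgraph, H.verts ⊆ C ∪ F ∧ IsCCertificateOfOrder G C H z

/-- The function `f_r(x) = 2x³ + 3x² - x`. -/
def fr (x : ℕ) : ℕ := 2 * x ^ 3 + 3 * x ^ 2 - x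

/-- A feedback vertex cut `(C, F)` is reducible if `|F| > f_r(|C|)`. -/
def IsReducibleFVC (G : SimpleGraph V) (C F : Set V) : Prop :=
  IsFVC G C F ∧ fr C.ncard < F.ncard

/-- A feedback vertex cut `(C, F)` is simple if `|F| ≤ 2 f_r(|C|)` and either
`G[F]` is connected, or all trees of `G[F]` have a common neighbor `v` and there is a
single-tree feedback vertex cut `(C, F₂)` with `v ∈ F₂ \ F` and `F ⊆ F₂`. -/
def IsSimpleFVC (G : SimpleGraph V) (C F : Set V) : Prop :=
  IsFVC G C F ∧ F.ncard ≤ 2 * fr C.ncard ∧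
    ((G.induce F).Connected ∨
      ∃ v : V,
        (∀ u ∈ F, ∃ u' ∈ F, (graphRestrict G F).Reachable u u' ∧ G.Adj u' v) ∧
        ∃ F₂ : Set V, IsFVC G C F₂ ∧ (G.induce F₂).Connected ∧ v ∈ F₂ \ F ∧ F ⊆ F₂)

/-- `G` contains a `v`-flower of order `k`: `k` cycles whose vertex sets pairwise
intersect exactly in `{v}`. -/
def HasFlower (G : SimpleGraph V) (v : V) (k : ℕ) : Prop :=
  ∃ c : Fin k → G.Walk v v,
    (∀ i, (c i).IsCycle) ∧
    ∀ i j, i ≠ j → {x | x ∈ (c i).support} ∩ {x | x ∈ (c j).support} = {v}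

/-- `G` contains `k` pairwise vertex-disjoint cycles. -/
def HasDisjointCycles (G : SimpleGraph V) (k : ℕ) : Prop :=
  ∃ (b : Fin k → V) (c : ∀ i, G.Walk (b i) (b i)),
    (∀ i, (c i).IsCycle) ∧
    ∀ i j, i ≠ j → Disjoint {x | x ∈ (c i).support} {x | x ∈ (c j).support}

/-- `(C, F)` is a 1-antler in `G` (self-contained definition): `G[F]` is a forest,
every tree of `G[F]` has at most one edge to `V(G) \ (C ∪ F)`, and `G[C ∪ F]`
contains `|C|` pairwise vertex-disjoint cycles. -/
def IsOneAntler (G : SimpleGraph V) (C F : Set V) : Prop :=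
  IsFVC G C F ∧ HasDisjointCycles (graphRestrict G (C ∪ F)) C.ncard

/-- `C 1, F 1, …, C ℓ, F ℓ` is a `z`-antler-sequence for `G`: the sets are pairwise
disjoint and each `(C i, F i)` is a `z`-antler in `G` minus all earlier sets. -/
def IsAntlerSeq (G : SimpleGraph V) (z ℓ : ℕ) (C F : Fin ℓ → Set V) : Prop :=
  (∀ i j, i ≠ j → Disjoint (C i) (C j)) ∧
  (∀ i j, i ≠ j → Disjoint (F i) (F j)) ∧
  (∀ i j, Disjoint (C i) (F j)) ∧
  ∀ i, IsZAntler (graphRestrict G (⋃ j, ⋃ (_ : j < i), (C j ∪ F j))ᶜ) z (C i) (F i)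

section Helpers

open SimpleGraph Set Function

/-! ### Basic walk and acyclicity helpers -/

lemma isAcyclic_comap {W : Type*} {A : SimpleGraph W} {B : SimpleGraph V} (f : W → V)
    (hf : Function.Injective f) (hAdj : ∀ u v, A.Adj u v → B.Adj (f u) (f v))
    (hB : B.IsAcyclic) : A.IsAcyclic := by
  intro v c hc
  exact hB (c.map ⟨f, fun {a b} h => hAdj a b h⟩)
    ((SimpleGraph.Walk.map_isCycle_iff_of_injective hf).2 hc)

lemma walk_support_adj {A : SimpleGraph V} {a b : V} (p : A.Walk a b) :
    ∀ x ∈ p.support, x = b ∨ ∃ y, A.Adj x y := by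
  induction p with
  | nil => intro x hx; rw [SimpleGraph.Walk.support_nil, List.mem_singleton] at hx; exact Or.inl hx
  | cons h q ih =>
    intro x hx
    rw [SimpleGraph.Walk.support_cons, List.mem_cons] at hx
    rcases hx with rfl | hx
    · exact Or.inr ⟨_, h⟩
    · exact ih x hx

lemma cycle_support_prop {A : SimpleGraph V} {P : V → Prop}
    (hP : ∀ u v, A.Adj u v → P u) {v : V} (c : A.Walk v v) (hc : c.IsCycle) :
    ∀ x ∈ c.support, P x := by
  intro x hx
  rcases walk_support_adj c x hx with rfl | ⟨y, hy⟩
  · cases c with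
    | nil => exact absurd rfl hc.ne_nil
    | cons h q => exact hP _ _ h
  · exact hP _ _ hy

/-- Transfer a cycle to another graph on the same vertex type, provided all edges
(between support vertices) are present there. -/
lemma cycle_restrict_of_support {A B : SimpleGraph V} {v : V}
    (c : A.Walk v v) (hc : c.IsCycle)
    (hAB : ∀ u w, A.Adj u w → u ∈ c.support → w ∈ c.support → B.Adj u w) :
    ∃ c' : B.Walk v v, c'.IsCycle ∧ c'.support = c.support := by
  have he : ∀ e ∈ c.edges, e ∈ B.edgeSet := by
    intro e he
    induction e with
    | h a b =>
      have hadj : A.Adj a b := (SimpleGraph.mem_edgeSet _).1 (c.edges_subset_edgeSet he)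
      exact (SimpleGraph.mem_edgeSet _).2
        (hAB a b hadj (c.fst_mem_support_of_mem_edges he) (c.snd_mem_support_of_mem_edges he))
  exact ⟨c.transfer B he, hc.transfer he, c.support_transfer he⟩

lemma reachable_of_mem_support {A : SimpleGraph V} {a b x : V} (p : A.Walk a b)
    (hx : x ∈ p.support) : A.Reachable a x := by
  classical
  exact ⟨p.takeUntil x hx⟩

/-! ### fvs helpers -/

lemma isFVS_univ (G : SimpleGraph V) : IsFVS G Set.univ := by
  intro v c hc
  cases c with
  | nil => exact hc.ne_nil rfl
  | cons h q => exact h.2.1 (Set.mem_univ _)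

lemma fvs_set_nonempty (G : SimpleGraph V) :
    {n | ∃ X : Set V, IsFVS G X ∧ X.ncard = n}.Nonempty :=
  ⟨_, Set.univ, isFVS_univ G, rfl⟩

lemma fvs_le_ncard {G : SimpleGraph V} {X : Set V} (h : IsFVS G X) : fvs G ≤ X.ncard :=
  Nat.sInf_le ⟨X, h, rfl⟩

lemma exists_fvs_min (G : SimpleGraph V) : ∃ X : Set V, IsFVS G X ∧ X.ncard = fvs G :=
  Nat.sInf_mem (fvs_set_nonempty G)

lemma le_fvs {G : SimpleGraph V} {n : ℕ} (h : ∀ Y : Set V, IsFVS G Y → n ≤ Y.ncard) :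
    n ≤ fvs G := by
  obtain ⟨X, hX, hc⟩ := exists_fvs_min G
  exact hc ▸ h X hX

/-! ### Subtype/ambient transfer helpers -/

lemma ncard_preimage_val_le {α : Type*} [Fintype α] {T : Set α} (W : Set α) :
    ((Subtype.val ⁻¹' W : Set T)).ncard ≤ W.ncard := by
  rw [← Set.ncard_image_of_injective _ (Subtype.val_injective (p := fun x => x ∈ T))]
  exact Set.ncard_le_ncard (Set.image_preimage_subset _ _) (Set.toFinite _)

lemma ncard_preimage_val {α : Type*} {T : Set α} {W : Set α} (hW : W ⊆ T) :
    ((Subtype.val ⁻¹' W : Set T)).ncard = W.ncard := by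
  rw [← Set.ncard_image_of_injective _ (Subtype.val_injective (p := fun x => x ∈ T)),
    Subtype.image_preimage_coe, Set.inter_eq_right.2 hW]

/-- Lift a walk in an ambient-vertex-type graph into the coercion of a subgraph,
keeping track of a side-condition set `B`. -/
lemma subgraph_lift_walk {Γ : SimpleGraph V} (K : Γ.Subgraph) {A : SimpleGraph V} {B : Set V}
    (hA : ∀ u v, A.Adj u v → K.Adj u v ∧ u ∈ B ∧ v ∈ B) :
    ∀ {a b : V} (p : A.Walk a b) (ha : a ∈ K.verts) (hb : b ∈ K.verts),
    ∃ q : (graphRestrict K.coe (Subtype.val ⁻¹' B)).Walk ⟨a, ha⟩ ⟨b, hb⟩,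
      q.support.map Subtype.val = p.support ∧
      q.edges.map (Sym2.map Subtype.val) = p.edges := by
  intro a b p
  induction p with
  | nil =>
    intro ha hb
    exact ⟨SimpleGraph.Walk.nil, by simp, by simp⟩
  | @cons a c b h p ih =>
    intro ha hb
    obtain ⟨hK, haB, hcB⟩ := hA _ _ h
    have hc : c ∈ K.verts := K.edge_vert hK.symm
    obtain ⟨q, hs, he⟩ := ih hc hb
    refine ⟨SimpleGraph.Walk.cons (by exact ⟨hK, haB, hcB⟩) q, ?_, ?_⟩
    · exact congrArg (List.cons a) hs
    · exact congrArg (List.cons s(a, c)) he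

lemma isCycle_of_maps {W : Type*} {A : SimpleGraph W} {B : SimpleGraph V} {f : W → V}
    {v : W} {w : V} (q : A.Walk v v) (p : B.Walk w w)
    (hs : q.support.map f = p.support) (he : q.edges.map (Sym2.map f) = p.edges)
    (hp : p.IsCycle) : q.IsCycle := by
  refine ⟨⟨⟨?_⟩, ?_⟩, ?_⟩
  · have := hp.edges_nodup
    rw [← he] at this
    exact this.of_map _
  · intro hq
    subst hq
    have := congrArg List.length hs
    simp only [SimpleGraph.Walk.support_nil, List.map_cons, List.map_nil, List.length_cons,
      List.length_nil] at this
    have hlen := SimpleGraph.Walk.length_support p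
    have h3 := hp.three_le_length
    omega
  · have := hp.support_nodup
    rw [← hs, ← List.map_tail] at this
    exact this.of_map _

end Helpers
section FVC

open SimpleGraph Set Function

variable {G : SimpleGraph V} {C F : Set V}


lemma mem_support_cons' {A : SimpleGraph V} {a d b x : V} {h : A.Adj a d} {q : A.Walk d b}
    (hx : x ∈ q.support) : x ∈ (SimpleGraph.Walk.cons h q).support := by
  rw [SimpleGraph.Walk.support_cons]; exact List.mem_cons_of_mem _ hx

lemma start_mem_support_cons' {A : SimpleGraph V} {a d b : V} {h : A.Adj a d} {q : A.Walk d b} :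
    a ∈ (SimpleGraph.Walk.cons h q).support := by
  rw [SimpleGraph.Walk.support_cons]; exact List.mem_cons_self

/-- If a path starts in `F`, ends outside `F`, avoids `C`, and some vertex `u₁` of the
tree of the start has an edge to `w₁ ∉ C ∪ F`, then the path decomposes: it stays in `F`
until reaching `u₁` and then exits via the edge `u₁w₁`. -/
lemma fvc_exit
    (hone : ∀ u₁ u₂ w₁ w₂ : V, u₁ ∈ F → u₂ ∈ F →
      (graphRestrict G F).Reachable u₁ u₂ → w₁ ∉ C ∪ F → w₂ ∉ C ∪ F →
      G.Adj u₁ w₁ → G.Adj u₂ w₂ → u₁ = u₂ ∧ w₁ = w₂)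
    {u₁ w₁ : V} (hu₁ : u₁ ∈ F) (hw₁ : w₁ ∉ C ∪ F) (hadj : G.Adj u₁ w₁) :
    ∀ {c b : V} (q : G.Walk c b), (∀ x ∈ q.support, x ∉ C) → c ∈ F → b ∉ F →
      (graphRestrict G F).Reachable u₁ c →
      ∃ (p₀ : G.Walk c u₁) (r : G.Walk w₁ b), q = p₀.append (SimpleGraph.Walk.cons hadj r) := by
  intro c b q
  induction q with
  | nil =>
    intro _ hc hb _
    exact absurd hc hb
  | @cons c d b h q ih =>
    intro hC hc hb hreach
    by_cases hd : d ∈ F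
    · have hreach' : (graphRestrict G F).Reachable u₁ d :=
        hreach.trans ⟨SimpleGraph.Walk.cons ⟨h, hc, hd⟩ SimpleGraph.Walk.nil⟩
      obtain ⟨p₀, r, hr⟩ := ih (fun x hx => hC x (mem_support_cons' hx)) hd hb hreach'
      exact ⟨SimpleGraph.Walk.cons h p₀, r, by rw [hr, SimpleGraph.Walk.cons_append]⟩
    · have hdno : d ∉ C ∪ F := by
        intro hm
        rcases hm with hm | hm
        · exact hC d (mem_support_cons' q.start_mem_support) hm
        · exact hd hm
      obtain ⟨h1, h2⟩ := hone u₁ c w₁ d hu₁ hc hreach hw₁ hdno hadj h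
      subst h1; subst h2
      exact ⟨SimpleGraph.Walk.nil, q, by rw [SimpleGraph.Walk.nil_append]⟩

/-- A path avoiding `C` whose two endpoints lie outside `F` avoids `F` entirely. -/
lemma fvc_path_avoid
    (hone : ∀ u₁ u₂ w₁ w₂ : V, u₁ ∈ F → u₂ ∈ F →
      (graphRestrict G F).Reachable u₁ u₂ → w₁ ∉ C ∪ F → w₂ ∉ C ∪ F →
      G.Adj u₁ w₁ → G.Adj u₂ w₂ → u₁ = u₂ ∧ w₁ = w₂) :
    ∀ {a b : V} (p : G.Walk a b), p.IsPath → (∀ x ∈ p.support, x ∉ C) → a ∉ F → b ∉ F →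
      ∀ x ∈ p.support, x ∉ F := by
  intro a b p
  induction p with
  | nil =>
    intro _ _ ha _ x hx
    rw [SimpleGraph.Walk.support_nil, List.mem_singleton] at hx
    subst hx; exact ha
  | @cons a d b h q ih =>
    intro hp hC ha hb x hx
    have hCq : ∀ y ∈ q.support, y ∉ C := fun y hy => hC y (mem_support_cons' hy)
    by_cases hd : d ∈ F
    · exfalso
      have haCF : a ∉ C ∪ F := by
        intro hm
        rcases hm with hm | hm
        · exact hC a start_mem_support_cons' hm
        · exact ha hm
      obtain ⟨p₀, r, hr⟩ := fvc_exit hone hd haCF h.symm q hCq hd hb (Reachable.refl d)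
      have hmem : a ∈ q.support := by
        rw [hr, SimpleGraph.Walk.mem_support_append_iff]
        right
        rw [SimpleGraph.Walk.support_cons]
        exact List.mem_cons_of_mem _ r.start_mem_support
      exact ((SimpleGraph.Walk.cons_isPath_iff h q).1 hp).2 hmem
    · rw [SimpleGraph.Walk.support_cons, List.mem_cons] at hx
      rcases hx with rfl | hx
      · exact ha
      · exact ih hp.of_cons hCq hd hb x hx

/-- A cycle whose basepoint lies outside `F` and which avoids `C` avoids `F`. -/
lemma fvc_cycle_basepoint
    (hone : ∀ u₁ u₂ w₁ w₂ : V, u₁ ∈ F → u₂ ∈ F →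
      (graphRestrict G F).Reachable u₁ u₂ → w₁ ∉ C ∪ F → w₂ ∉ C ∪ F →
      G.Adj u₁ w₁ → G.Adj u₂ w₂ → u₁ = u₂ ∧ w₁ = w₂)
    {y : V} (c : G.Walk y y) (hc : c.IsCycle)
    (hC : ∀ x ∈ c.support, x ∉ C) (hy : y ∉ F) :
    ∀ x ∈ c.support, x ∉ F := by
  cases c with
  | nil => exact absurd rfl hc.ne_nil
  | @cons y d y' h q =>
    intro x hx hxF
    have hq : q.IsPath := SimpleGraph.Walk.IsPath.mk' (by
      have := hc.support_nodup
      rwa [SimpleGraph.Walk.support_cons, List.tail_cons] at this)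
    have hCq : ∀ z ∈ q.support, z ∉ C := fun z hz => hC z (mem_support_cons' hz)
    rw [SimpleGraph.Walk.support_cons, List.mem_cons] at hx
    rcases hx with rfl | hx
    · exact hy hxF
    by_cases hd : d ∈ F
    · -- exit lemma yields the too-short cycle contradiction
      have hyCF : y ∉ C ∪ F := by
        intro hm
        rcases hm with hm | hm
        · exact hC y start_mem_support_cons' hm
        · exact hy hm
      obtain ⟨p₀, r, hr⟩ := fvc_exit hone hd hyCF h.symm q hCq hd hy (Reachable.refl d)
      -- p₀ : G.Walk d d is a sub-path hence nil
      have hp₀ : p₀.IsPath := by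
        have : (p₀.append (SimpleGraph.Walk.cons h.symm r)).IsPath := hr ▸ hq
        exact this.of_append_left
      have hp₀nil : p₀ = SimpleGraph.Walk.nil := SimpleGraph.Walk.isPath_iff_eq_nil.1 hp₀
      subst hp₀nil
      rw [SimpleGraph.Walk.nil_append] at hr
      -- now q = cons (d~y) r with r : G.Walk y y a path, so r = nil
      have hrpath : r.IsPath := by
        have := hr ▸ hq
        exact ((SimpleGraph.Walk.cons_isPath_iff _ _).1 this).1
      have hrnil : r = SimpleGraph.Walk.nil := SimpleGraph.Walk.isPath_iff_eq_nil.1 hrpath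
      subst hrnil
      have h3 := hc.three_le_length
      rw [hr] at h3
      simp at h3
    · exact fvc_path_avoid hone q hq hCq hd hy x hx hxF


lemma mem_support_tail_closed {A : SimpleGraph V} {v : V} (c : A.Walk v v)
    (hnil : c ≠ SimpleGraph.Walk.nil) : ∀ x ∈ c.support, x ∈ c.support.tail := by
  cases c with
  | nil => exact absurd rfl hnil
  | cons h q =>
    intro x hx
    rw [SimpleGraph.Walk.support_cons, List.mem_cons] at hx
    rw [SimpleGraph.Walk.support_cons, List.tail_cons]
    rcases hx with rfl | hx
    · exact q.end_mem_support
    · exact hx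

/-- Key structural fact: in a feedback vertex cut `(C, F)`, every cycle avoiding `C`
also avoids `F`. -/
lemma fvc_cycle_avoid (hfvc : IsFVC G C F) {v : V}
    (c : G.Walk v v) (hc : c.IsCycle) (hC : ∀ x ∈ c.support, x ∉ C) :
    ∀ x ∈ c.support, x ∉ F := by
  classical
  obtain ⟨hdisj, hforest, hone⟩ := hfvc
  by_cases hall : ∀ y ∈ c.support, y ∈ F
  · intro x hx hxF
    obtain ⟨c', hc', hsup⟩ := cycle_restrict_of_support (B := graphRestrict G F) c hc
      (fun u w h hu hw => ⟨h, hall u hu, hall w hw⟩)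
    exact hforest c' hc'
  · push_neg at hall
    obtain ⟨y, hy, hyF⟩ := hall
    intro x hx hxF
    have hrot := hc.rotate hy
    have hsupp : ∀ z, z ∈ (c.rotate y hy).support ↔ z ∈ c.support := by
      intro z
      constructor
      · intro hz
        exact List.mem_of_mem_tail (((SimpleGraph.Walk.support_rotate c y hy).mem_iff).1
          (mem_support_tail_closed _ hrot.ne_nil z hz))
      · intro hz
        exact List.mem_of_mem_tail (((SimpleGraph.Walk.support_rotate c y hy).mem_iff).2
          (mem_support_tail_closed _ hc.ne_nil z hz))
    exact fvc_cycle_basepoint hone (c.rotate y hy) hrot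
      (fun z hz => hC z ((hsupp z).1 hz)) hyF x ((hsupp x).2 hx) hxF

end FVC
section Bridge

open SimpleGraph Set Function

lemma reachable_coe_iff {Γ : SimpleGraph V} (K : Γ.Subgraph) (u v : K.verts) :
    K.coe.Reachable u v ↔ K.spanningCoe.Reachable ↑u ↑v := by
  constructor
  · rintro ⟨p⟩
    exact ⟨p.map (⟨Subtype.val, fun {a b} h => h⟩ : K.coe →g K.spanningCoe)⟩
  · rintro ⟨p⟩
    obtain ⟨q, -, -⟩ := subgraph_lift_walk K (B := Set.univ)
      (fun a b h => ⟨h, trivial, trivial⟩) p u.2 v.2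
    have hle : graphRestrict K.coe (Subtype.val ⁻¹' (Set.univ : Set V)) ≤ K.coe :=
      fun {a b} h => h.1
    exact ⟨q.mapLe hle⟩

lemma fvs_coe_spanning {Γ : SimpleGraph V} [Fintype V] (K : Γ.Subgraph) (A : Set V) :
    fvs (graphRestrict K.coe (Subtype.val ⁻¹' A)) = fvs (graphRestrict K.spanningCoe A) := by
  apply le_antisymm
  · obtain ⟨W, hW, hWc⟩ := exists_fvs_min (graphRestrict K.spanningCoe A)
    rw [← hWc]
    refine le_trans (fvs_le_ncard ?_) (ncard_preimage_val_le W)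
    refine isAcyclic_comap Subtype.val Subtype.val_injective ?_ hW
    intro u v h
    exact ⟨⟨h.1.1, h.1.2.1, h.1.2.2⟩, h.2.1, h.2.2⟩
  · obtain ⟨Y, hY, hYc⟩ := exists_fvs_min (graphRestrict K.coe (Subtype.val ⁻¹' A))
    rw [← hYc, ← Set.ncard_image_of_injective Y
      (Subtype.val_injective (p := fun x => x ∈ K.verts))]
    refine fvs_le_ncard ?_
    intro v c hc
    have hv : v ∈ K.verts := by
      cases c with
      | nil => exact absurd rfl hc.ne_nil
      | cons h q => exact K.edge_vert h.1.1
    obtain ⟨q, hs, he⟩ := subgraph_lift_walk K (B := A ∩ (Subtype.val '' Y)ᶜ)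
      (by intro a b h; exact ⟨h.1.1, ⟨h.1.2.1, h.2.1⟩, ⟨h.1.2.2, h.2.2⟩⟩) c hv hv
    have hq := isCycle_of_maps q c hs he hc
    have hset : (Subtype.val ⁻¹' (A ∩ (Subtype.val '' Y)ᶜ) : Set K.verts)
        = (Subtype.val ⁻¹' A) ∩ Yᶜ := by
      ext u
      simp only [Set.mem_preimage, Set.mem_inter_iff, Set.mem_compl_iff, Set.mem_image]
      constructor
      · rintro ⟨h1, h2⟩
        exact ⟨h1, fun hu => h2 ⟨u, hu, rfl⟩⟩
      · rintro ⟨h1, h2⟩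
        refine ⟨h1, ?_⟩
        rintro ⟨w, hw, hwu⟩
        exact h2 (by rwa [← Subtype.val_injective hwu])
    have hY' : (graphRestrict (graphRestrict K.coe (Subtype.val ⁻¹' A)) Yᶜ).IsAcyclic := hY
    have : (graphRestrict K.coe (Subtype.val ⁻¹' (A ∩ (Subtype.val '' Y)ᶜ))).IsAcyclic := by
      refine isAcyclic_comap id Function.injective_id ?_ hY'
      intro a b h
      rw [hset] at h
      exact ⟨⟨h.1, h.2.1.1, h.2.2.1⟩, h.2.1.2, h.2.2.2⟩
    exact this q hq

end Bridge

open SimpleGraph Set Function in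
theorem stmt6 [Fintype V] (G : SimpleGraph V) (z : ℕ) (C₁ F₁ C₂ F₂ : Set V)
    (h₁ : IsZAntler G z C₁ F₁) (h₂ : IsAntler G C₂ F₂) :
    IsZAntler (graphRestrict G (C₂ ∪ F₂)ᶜ) z (C₁ \ (C₂ ∪ F₂)) (F₁ \ (C₂ ∪ F₂)) := by
  classical
  obtain ⟨⟨hfvc₁, -⟩, H, hHsub, ⟨⟨hC₁sub, hminF, hminLe⟩, horder⟩⟩ := h₁
  obtain ⟨hfvc₂, hcard₂⟩ := h₂
  set X := C₂ ∪ F₂ with hX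
  set C := C₁ \ X with hC
  set F := F₁ \ X with hF
  have hdisj₁ := hfvc₁.1
  have hforest₁ := hfvc₁.2.1
  have hone₁ := hfvc₁.2.2
  -- (V1) at the ambient level, C₁ is an FVS of the spanning coercion of H
  have hV1 : (graphRestrict H.spanningCoe C₁ᶜ).IsAcyclic := by
    intro a c hc
    have ha : a ∈ H.verts := by
      cases c with
      | nil => exact absurd rfl hc.ne_nil
      | cons h q => exact H.edge_vert h.1
    obtain ⟨q, hs, he⟩ := subgraph_lift_walk H (B := C₁ᶜ)
      (by intro u v h; exact ⟨h.1, h.2.1, h.2.2⟩) c ha ha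
    exact hminF q (isCycle_of_maps q c hs he hc)
  -- (V2) ambient-level minimality of C₁
  have hV2 : ∀ W : Set V, IsFVS H.spanningCoe W → C₁.ncard ≤ W.ncard := by
    intro W hW
    have hY : IsFVS H.coe {u : ↥H.verts | ↑u ∈ W} := by
      refine isAcyclic_comap Subtype.val Subtype.val_injective ?_ hW
      intro u v h
      exact ⟨h.1, h.2.1, h.2.2⟩
    have h1 : ({u : ↥H.verts | ↑u ∈ C₁} : Set ↥H.verts).ncard = C₁.ncard :=
      ncard_preimage_val hC₁sub
    have h2 : ({u : ↥H.verts | ↑u ∈ W} : Set ↥H.verts).ncard ≤ W.ncard :=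
      ncard_preimage_val_le W
    calc C₁.ncard = _ := h1.symm
      _ ≤ _ := hminLe _ hY
      _ ≤ W.ncard := h2
  -- Claim A: an FVS of G[X] avoiding most of F₁
  have hMfvs : IsFVS (graphRestrict G X) ((C₂ \ F₁) ∪ ((C₁ ∩ X) \ C₂)) := by
    intro v c hc
    have hsupp : ∀ x ∈ c.support, x ∈ X ∧ x ∉ (C₂ \ F₁) ∪ ((C₁ ∩ X) \ C₂) :=
      cycle_support_prop (by intro u w h; exact ⟨h.1.2.1, h.2.1⟩) c hc
    obtain ⟨cG, hcG, hsupG⟩ := cycle_restrict_of_support (B := G) c hc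
      (by intro u w h _ _; exact h.1.1)
    have hsuppG : ∀ x ∈ cG.support, x ∈ X ∧ x ∉ (C₂ \ F₁) ∪ ((C₁ ∩ X) \ C₂) := by
      rw [hsupG]; exact hsupp
    have hCavoid : ∀ x ∈ cG.support, x ∉ C₁ := by
      intro x hx hxC₁
      obtain ⟨hxX, hxM⟩ := hsuppG x hx
      have hxC₂ : x ∈ C₂ := by
        by_contra hxC₂
        exact hxM (Or.inr ⟨⟨hxC₁, hxX⟩, hxC₂⟩)
      exact hxM (Or.inl ⟨hxC₂, Set.disjoint_left.1 hdisj₁ hxC₁⟩)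
    by_cases hC₂case : ∃ x ∈ cG.support, x ∈ C₂
    · obtain ⟨x, hx, hxC₂⟩ := hC₂case
      have hxF₁ : x ∈ F₁ := by
        by_contra hxF₁
        exact (hsuppG x hx).2 (Or.inl ⟨hxC₂, hxF₁⟩)
      exact fvc_cycle_avoid hfvc₁ cG hcG hCavoid x hx hxF₁
    · push_neg at hC₂case
      have hvF₂ : v ∈ F₂ := by
        have hvX := (hsuppG v cG.start_mem_support).1
        rcases hvX with h | h
        · exact absurd h (hC₂case v cG.start_mem_support)
        · exact h
      exact fvc_cycle_avoid hfvc₂ cG hcG hC₂case v cG.start_mem_support hvF₂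
  -- (V3) the key cardinality exchange bound
  have hV3 : (C₂ ∩ (C₁ ∪ F₁)).ncard ≤ (C₁ ∩ X).ncard := by
    have hMle : C₂.ncard ≤ (C₂ \ F₁).ncard + ((C₁ ∩ X) \ C₂).ncard :=
      le_trans (le_trans hcard₂ (fvs_le_ncard hMfvs)) (Set.ncard_union_le _ _)
    have e1 : (C₂ ∩ F₁).ncard + (C₂ \ F₁).ncard = C₂.ncard :=
      Set.ncard_inter_add_ncard_diff_eq_ncard C₂ F₁ (Set.toFinite _)
    have e3 : ((C₁ ∩ X) ∩ C₂).ncard + ((C₁ ∩ X) \ C₂).ncard = (C₁ ∩ X).ncard :=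
      Set.ncard_inter_add_ncard_diff_eq_ncard _ C₂ (Set.toFinite _)
    have e4 : C₂ ∩ (C₁ ∪ F₁) = ((C₁ ∩ X) ∩ C₂) ∪ (C₂ ∩ F₁) := by
      ext x
      simp only [Set.mem_inter_iff, Set.mem_union, hX, Set.mem_diff]
      constructor
      · rintro ⟨hx2, hx1 | hxF⟩
        · exact Or.inl ⟨⟨hx1, Or.inl hx2⟩, hx2⟩
        · exact Or.inr ⟨hx2, hxF⟩
      · rintro (⟨⟨hx1, _⟩, hx2⟩ | ⟨hx2, hxF⟩)
        · exact ⟨hx2, Or.inl hx1⟩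
        · exact ⟨hx2, Or.inr hxF⟩
    have e5 : Disjoint ((C₁ ∩ X) ∩ C₂) (C₂ ∩ F₁) := by
      rw [Set.disjoint_left]
      rintro x ⟨⟨hx1, _⟩, _⟩ ⟨_, hxF⟩
      exact Set.disjoint_left.1 hdisj₁ hx1 hxF
    have e6 : (C₂ ∩ (C₁ ∪ F₁)).ncard = ((C₁ ∩ X) ∩ C₂).ncard + (C₂ ∩ F₁).ncard := by
      rw [e4]
      exact Set.ncard_union_eq e5 (Set.toFinite _) (Set.toFinite _)
    omega
  -- (V4) main counting lemma: any FVS of Ĥ − X has at least |C| vertices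
  have hV4 : ∀ S : Set V, IsFVS (graphRestrict H.spanningCoe Xᶜ) S → C.ncard ≤ S.ncard := by
    intro S hS
    have hW' : IsFVS H.spanningCoe ((S \ X) ∪ (C₂ ∩ (C₁ ∪ F₁))) := by
      intro v c hc
      have hsupp : ∀ x ∈ c.support,
          (x ∈ C₁ ∪ F₁) ∧ x ∉ (S \ X) ∪ (C₂ ∩ (C₁ ∪ F₁)) :=
        cycle_support_prop (by intro u w h; exact ⟨hHsub (H.edge_vert h.1), h.2.1⟩) c hc
      obtain ⟨cG, hcG, hsupG⟩ := cycle_restrict_of_support (B := G) c hc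
        (by intro u w h _ _; exact H.adj_sub h.1)
      have hsuppG : ∀ x ∈ cG.support,
          (x ∈ C₁ ∪ F₁) ∧ x ∉ (S \ X) ∪ (C₂ ∩ (C₁ ∪ F₁)) := by
        rw [hsupG]; exact hsupp
      have hC₂av : ∀ x ∈ cG.support, x ∉ C₂ := by
        intro x hx hx2
        exact (hsuppG x hx).2 (Or.inr ⟨hx2, (hsuppG x hx).1⟩)
      have hF₂av : ∀ x ∈ cG.support, x ∉ F₂ := fvc_cycle_avoid hfvc₂ cG hcG hC₂av
      have hXavc : ∀ x ∈ c.support, x ∉ X := by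
        intro x hx hxX
        have hx' : x ∈ cG.support := by rw [hsupG]; exact hx
        rcases hxX with h | h
        · exact hC₂av x hx' h
        · exact hF₂av x hx' h
      have hSav : ∀ x ∈ c.support, x ∉ S := by
        intro x hx hxS
        exact (hsupp x hx).2 (Or.inl ⟨hxS, hXavc x hx⟩)
      obtain ⟨c', hc', -⟩ := cycle_restrict_of_support
        (B := graphRestrict (graphRestrict H.spanningCoe Xᶜ) Sᶜ) c hc
        (by intro u w h hu hw
            exact ⟨⟨h.1, hXavc u hu, hXavc w hw⟩, hSav u hu, hSav w hw⟩)
      exact hS c' hc'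
    have hcount := hV2 _ hW'
    have h1 : ((S \ X) ∪ (C₂ ∩ (C₁ ∪ F₁))).ncard
        ≤ (S \ X).ncard + (C₂ ∩ (C₁ ∪ F₁)).ncard := Set.ncard_union_le _ _
    have h2 : (C₁ ∩ X).ncard + C.ncard = C₁.ncard := by
      have := Set.ncard_inter_add_ncard_diff_eq_ncard C₁ X (Set.toFinite _)
      rw [hC]
      omega
    have h3 : (S \ X).ncard ≤ S.ncard := Set.ncard_le_ncard Set.diff_subset (Set.toFinite _)
    omega
  -- (V5) C is an FVS of Ĥ − X at the ambient level
  have hV5 : (graphRestrict H.spanningCoe (Xᶜ ∩ Cᶜ)).IsAcyclic := by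
    refine isAcyclic_comap id Function.injective_id ?_ hV1
    intro u w h
    refine ⟨h.1, ?_, ?_⟩
    · intro hu1; exact h.2.1.2 ⟨hu1, h.2.1.1⟩
    · intro hw1; exact h.2.2.2 ⟨hw1, h.2.2.1⟩
  -- the new certificate subgraph
  let H' : (graphRestrict G Xᶜ).Subgraph :=
    ⟨H.verts \ X, fun u v => H.Adj u v ∧ u ∉ X ∧ v ∉ X,
      fun h => ⟨H.adj_sub h.1, h.2.1, h.2.2⟩,
      fun h => ⟨H.edge_vert h.1, h.2.1⟩,
      ⟨fun u v h => ⟨h.1.symm, h.2.2, h.2.1⟩⟩⟩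
  refine ⟨⟨⟨?_, ?_, ?_⟩, ?_⟩, ⟨H', ?_, ⟨⟨?_, ?_, ?_⟩, ?_⟩⟩⟩
  · -- disjointness
    exact hdisj₁.mono Set.diff_subset Set.diff_subset
  · -- forest
    refine isAcyclic_comap id Function.injective_id ?_ hforest₁
    intro u w h
    exact ⟨h.1.1, h.2.1.1, h.2.2.1⟩
  · -- single-exit condition
    intro u₁ u₂ w₁ w₂ hu₁ hu₂ hreach hw₁ hw₂ ha₁ ha₂
    have hle : graphRestrict (graphRestrict G Xᶜ) F ≤ graphRestrict G F₁ :=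
      fun {a b} h => ⟨h.1.1, h.2.1.1, h.2.2.1⟩
    have hreach' : (graphRestrict G F₁).Reachable u₁ u₂ := Reachable.mono hle hreach
    have hw₁' : w₁ ∉ C₁ ∪ F₁ := by
      intro hm
      rcases hm with hm | hm
      · exact hw₁ (Or.inl ⟨hm, ha₁.2.2⟩)
      · exact hw₁ (Or.inr ⟨hm, ha₁.2.2⟩)
    have hw₂' : w₂ ∉ C₁ ∪ F₁ := by
      intro hm
      rcases hm with hm | hm
      · exact hw₂ (Or.inl ⟨hm, ha₂.2.2⟩)
      · exact hw₂ (Or.inr ⟨hm, ha₂.2.2⟩)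
    exact hone₁ u₁ u₂ w₁ w₂ hu₁.1 hu₂.1 hreach' hw₁' hw₂' ha₁.1 ha₂.1
  · -- antler cardinality inequality
    refine le_fvs ?_
    intro Y hY
    refine hV4 Y ?_
    intro v c hc
    have hsupp : ∀ x ∈ c.support, (x ∈ H.verts) ∧ x ∉ X ∧ x ∉ Y :=
      cycle_support_prop (by intro u w h; exact ⟨H.edge_vert h.1.1, h.1.2.1, h.2.1⟩) c hc
    have hedge : ∀ u w, (graphRestrict (graphRestrict H.spanningCoe Xᶜ) Yᶜ).Adj u w →
        u ∈ c.support → w ∈ c.support →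
        (graphRestrict (graphRestrict (graphRestrict G Xᶜ) (C ∪ F)) Yᶜ).Adj u w := by
      intro u w h hu hw
      have hu' := hsupp u hu
      have hw' := hsupp w hw
      have huCF : u ∈ C ∪ F := by
        rcases hHsub hu'.1 with h1 | h1
        · exact Or.inl ⟨h1, hu'.2.1⟩
        · exact Or.inr ⟨h1, hu'.2.1⟩
      have hwCF : w ∈ C ∪ F := by
        rcases hHsub hw'.1 with h1 | h1
        · exact Or.inl ⟨h1, hw'.2.1⟩
        · exact Or.inr ⟨h1, hw'.2.1⟩
      exact ⟨⟨⟨H.adj_sub h.1.1, hu'.2.1, hw'.2.1⟩, huCF, hwCF⟩, hu'.2.2, hw'.2.2⟩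
    obtain ⟨c', hc', -⟩ := cycle_restrict_of_support
      (B := graphRestrict (graphRestrict (graphRestrict G Xᶜ) (C ∪ F)) Yᶜ) c hc hedge
    exact hY c' hc'
  · -- verts ⊆ C ∪ F
    intro x hx
    rcases hHsub hx.1 with h1 | h1
    · exact Or.inl ⟨h1, hx.2⟩
    · exact Or.inr ⟨h1, hx.2⟩
  · -- C ⊆ verts
    exact fun x hx => ⟨hC₁sub hx.1, hx.2⟩
  · -- the trace of C is an FVS of the new certificate
    refine isAcyclic_comap Subtype.val Subtype.val_injective ?_ hV5
    intro u w h
    exact ⟨h.1.1, ⟨h.1.2.1, h.2.1⟩, ⟨h.1.2.2, h.2.2⟩⟩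
  · -- minimality
    intro Y₀ hY₀
    have htr : ({u : ↥H'.verts | ↑u ∈ C} : Set ↥H'.verts).ncard = C.ncard :=
      ncard_preimage_val (fun x hx => ⟨hC₁sub hx.1, hx.2⟩)
    have himg : IsFVS (graphRestrict H.spanningCoe Xᶜ) (Subtype.val '' Y₀) := by
      intro v c hc
      have hv : v ∈ H'.verts := by
        cases c with
        | nil => exact absurd rfl hc.ne_nil
        | cons h q => exact ⟨H.edge_vert h.1.1, h.1.2.1⟩
      obtain ⟨q, hs, he⟩ := subgraph_lift_walk H' (B := (Subtype.val '' Y₀)ᶜ)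
        (by intro a b h; exact ⟨⟨h.1.1, h.1.2.1, h.1.2.2⟩, h.2.1, h.2.2⟩) c hv hv
      have hq := isCycle_of_maps q c hs he hc
      have hpre : (Subtype.val ⁻¹' ((Subtype.val '' Y₀)ᶜ) : Set ↥H'.verts) = Y₀ᶜ := by
        rw [Set.preimage_compl, Set.preimage_image_eq _ Subtype.val_injective]
      have hY₀' : (graphRestrict H'.coe
          ((Subtype.val ⁻¹' ((Subtype.val '' Y₀)ᶜ)) : Set ↥H'.verts)).IsAcyclic := by
        rw [hpre]
        exact hY₀
      exact hY₀' q hq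
    calc ({u : ↥H'.verts | ↑u ∈ C} : Set ↥H'.verts).ncard = C.ncard := htr
      _ ≤ (Subtype.val '' Y₀).ncard := hV4 _ himg
      _ = Y₀.ncard := Set.ncard_image_of_injective _ Subtype.val_injective
  · -- order z condition
    intro v
    set Dv : Set V := {x : V | ∃ hx : x ∈ H'.verts, H'.coe.Reachable ⟨x, hx⟩ v} with hDv
    have hDvspan : ∀ (x : V) (hx : x ∈ H'.verts),
        H'.coe.Reachable ⟨x, hx⟩ v ↔ H'.spanningCoe.Reachable x ↑v :=
      fun x hx => reachable_coe_iff H' ⟨x, hx⟩ v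
    have hRset : {u : ↥H'.verts | H'.coe.Reachable u v}
        = (Subtype.val ⁻¹' Dv : Set ↥H'.verts) := by
      ext u
      simp only [Set.mem_setOf_eq, Set.mem_preimage, hDv]
      constructor
      · intro h; exact ⟨u.2, h⟩
      · rintro ⟨hu, h⟩; exact h
    have hclosed : ∀ x ∈ Dv, ∀ y, H'.spanningCoe.Reachable y x → y ∈ Dv := by
      rintro x ⟨hx, hr⟩ y hy
      obtain ⟨p⟩ := hy
      cases p with
      | nil => exact ⟨hx, hr⟩
      | cons h q =>
        have hyv : y ∈ H'.verts := H'.edge_vert h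
        refine ⟨hyv, ?_⟩
        have h1 : H'.spanningCoe.Reachable y x := ⟨SimpleGraph.Walk.cons h q⟩
        have h2 : H'.spanningCoe.Reachable x ↑v := (hDvspan x hx).1 hr
        exact (hDvspan y hyv).2 (h1.trans h2)
    have hup : IsFVS (graphRestrict H'.spanningCoe Dv) (C ∩ Dv) := by
      refine isAcyclic_comap id Function.injective_id ?_ hV5
      intro u w h
      exact ⟨h.1.1.1, ⟨h.1.1.2.1, fun hc1 => h.2.1 ⟨hc1, h.1.2.1⟩⟩,
        ⟨h.1.1.2.2, fun hc1 => h.2.2 ⟨hc1, h.1.2.2⟩⟩⟩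
    have hge1 : ∀ Y : Set V, IsFVS (graphRestrict H'.spanningCoe Dv) Y →
        (C ∩ Dv).ncard ≤ Y.ncard := by
      intro Y hYv
      have hS' : IsFVS (graphRestrict H.spanningCoe Xᶜ) ((Y ∩ Dv) ∪ (C \ Dv)) := by
        intro w0 c hc
        have hsupp : ∀ x ∈ c.support, (x ∈ H'.verts) ∧ x ∉ (Y ∩ Dv) ∪ (C \ Dv) :=
          cycle_support_prop (by intro u w h; exact ⟨⟨H.edge_vert h.1.1, h.1.2.1⟩, h.2.1⟩) c hc
        by_cases hm : ∃ x ∈ c.support, x ∈ Dv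
        · obtain ⟨x₀, hx₀, hx₀D⟩ := hm
          have hleH : graphRestrict (graphRestrict H.spanningCoe Xᶜ)
              ((Y ∩ Dv) ∪ (C \ Dv))ᶜ ≤ H'.spanningCoe :=
            fun {a b} h => ⟨h.1.1, h.1.2.1, h.1.2.2⟩
          have hallD : ∀ y ∈ c.support, y ∈ Dv := by
            intro y hy
            have hry : H'.spanningCoe.Reachable w0 y :=
              Reachable.mono hleH (reachable_of_mem_support c hy)
            have hrx : H'.spanningCoe.Reachable w0 x₀ :=
              Reachable.mono hleH (reachable_of_mem_support c hx₀)
            exact hclosed x₀ hx₀D y (hry.symm.trans hrx)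
          have hYav : ∀ x ∈ c.support, x ∉ Y :=
            fun x hx hxY => (hsupp x hx).2 (Or.inl ⟨hxY, hallD x hx⟩)
          obtain ⟨c', hc', -⟩ := cycle_restrict_of_support
            (B := graphRestrict (graphRestrict H'.spanningCoe Dv) Yᶜ) c hc
            (by intro u w h hu hw
                exact ⟨⟨h.1, hallD u hu, hallD w hw⟩, hYav u hu, hYav w hw⟩)
          exact hYv c' hc'
        · push_neg at hm
          have hCav : ∀ x ∈ c.support, x ∉ C :=
            fun x hx hxC => (hsupp x hx).2 (Or.inr ⟨hxC, hm x hx⟩)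
          obtain ⟨c', hc', -⟩ := cycle_restrict_of_support
            (B := graphRestrict H.spanningCoe (Xᶜ ∩ Cᶜ)) c hc
            (by intro u w h hu hw
                exact ⟨h.1.1, ⟨h.1.2.1, hCav u hu⟩, ⟨h.1.2.2, hCav w hw⟩⟩)
          exact hV5 c' hc'
      have h1 := hV4 _ hS'
      have h2 : ((Y ∩ Dv) ∪ (C \ Dv)).ncard ≤ (Y ∩ Dv).ncard + (C \ Dv).ncard :=
        Set.ncard_union_le _ _
      have h3 : (C ∩ Dv).ncard + (C \ Dv).ncard = C.ncard :=
        Set.ncard_inter_add_ncard_diff_eq_ncard _ _ (Set.toFinite _)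
      have h4 : (Y ∩ Dv).ncard ≤ Y.ncard :=
        Set.ncard_le_ncard Set.inter_subset_left (Set.toFinite _)
      omega
    have hfvseq : fvs (graphRestrict H'.spanningCoe Dv) = (C ∩ Dv).ncard :=
      le_antisymm (fvs_le_ncard hup) (le_fvs hge1)
    have hbridge := fvs_coe_spanning H' Dv
    have hinterpre : ({u : ↥H'.verts | ↑u ∈ C} ∩ Subtype.val ⁻¹' Dv : Set ↥H'.verts)
        = Subtype.val ⁻¹' (C ∩ Dv) := rfl
    have hncard' : ({u : ↥H'.verts | ↑u ∈ C} ∩ Subtype.val ⁻¹' Dv : Set ↥H'.verts).ncard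
        = (C ∩ Dv).ncard := by
      rw [hinterpre]
      exact ncard_preimage_val (fun x hx => ⟨hC₁sub hx.1.1, hx.1.2⟩)
    constructor
    · rw [hRset, hbridge, hfvseq, hncard']
    · rw [hRset, hncard']
      have hvH : (↑v : V) ∈ H.verts := v.2.1
      have hz := (horder ⟨↑v, hvH⟩).2
      have hsub : C ∩ Dv ⊆ Subtype.val ''
          ({u : ↥H.verts | ↑u ∈ C₁} ∩ {u | H.coe.Reachable u ⟨↑v, hvH⟩}) := by
        rintro x ⟨hxC, hxD⟩
        obtain ⟨hxv, hxr⟩ := hxD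
        refine ⟨⟨x, hxv.1⟩, ⟨hxC.1, ?_⟩, rfl⟩
        have h1 : H'.spanningCoe.Reachable x ↑v := (hDvspan x hxv).1 hxr
        have hle2 : H'.spanningCoe ≤ H.spanningCoe := fun {a b} h => h.1
        have h2 : H.spanningCoe.Reachable x ↑v := Reachable.mono hle2 h1
        exact (reachable_coe_iff H ⟨x, hxv.1⟩ ⟨↑v, hvH⟩).2 h2
      calc (C ∩ Dv).ncard ≤ _ := Set.ncard_le_ncard hsub (Set.toFinite _)
        _ = _ := Set.ncard_image_of_injective _ Subtype.val_injective
        _ ≤ z := hz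
end

section
/- Let G be a finite simple graph such that G − v is acyclic for some vertex v. Then there exists a set X ⊆ V(G) \ {v} such that G − X is acyclic and G contains a v-flower of order |X|. -/
variable {V : Type*}

section myaux
set_option linter.unusedSectionVars false
variable {V : Type*}
open SimpleGraph Walk



open SimpleGraph Walk

lemma graphRestrict_le (G : SimpleGraph V) (S : Set V) : graphRestrict G S ≤ G :=
  fun _ _ h => h.1

lemma graphRestrict_mono (G : SimpleGraph V) {A B : Set V} (h : A ⊆ B) :
    graphRestrict G A ≤ graphRestrict G B := fun _ _ ha => ⟨ha.1, h ha.2.1, h ha.2.2⟩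

lemma graphRestrict_univ (G : SimpleGraph V) : graphRestrict G Set.univ = G := by
  ext u w; simp [graphRestrict]

lemma isAcyclic_anti {G H : SimpleGraph V} (h : G ≤ H) (hH : H.IsAcyclic) : G.IsAcyclic :=
  fun _ c hc => hH (c.mapLe h) (hc.mapLe h)

lemma support_mem_restrict {G : SimpleGraph V} {A : Set V} {a b : V}
    (p : (graphRestrict G A).Walk a b) (ha : a ∈ A) : ∀ x ∈ p.support, x ∈ A := by
  induction p with
  | nil => intro x hx; rw [support_nil, List.mem_singleton] at hx; subst hx; exact ha
  | cons h q ih =>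
    intro x hx
    rw [support_cons, List.mem_cons] at hx
    rcases hx with rfl | hx
    · exact ha
    · exact ih h.2.2 x hx

lemma cycle_start_mem_restrict {G : SimpleGraph V} {A : Set V} {u : V}
    {c : (graphRestrict G A).Walk u u} (hc : c.IsCycle) : u ∈ A := by
  cases c with
  | nil => exact absurd hc (IsCycle.not_of_nil)
  | cons h q => exact h.2.1

lemma edges_mem_restrict {G : SimpleGraph V} {A B : Set V} {a b : V}
    (p : (graphRestrict G A).Walk a b) (h : ∀ x ∈ p.support, x ∈ B) :
    ∀ e ∈ p.edges, e ∈ (graphRestrict G B).edgeSet := by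
  intro e he
  induction e with
  | h x y =>
    rw [SimpleGraph.mem_edgeSet]
    have hadj := p.adj_of_mem_edges he
    exact ⟨hadj.1, h x (p.fst_mem_support_of_mem_edges he),
      h y (p.snd_mem_support_of_mem_edges he)⟩

noncomputable def rootOf (F : SimpleGraph V) (u : V) : V := (F.connectedComponentMk u).out

lemma reachable_rootOf (F : SimpleGraph V) (u : V) : F.Reachable (rootOf F u) u :=
  (SimpleGraph.ConnectedComponent.exact (by
    show F.connectedComponentMk _ = F.connectedComponentMk u
    exact Quot.out_eq _))

lemma rootOf_eq_of_reachable {F : SimpleGraph V} {u w : V} (h : F.Reachable u w) :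
    rootOf F u = rootOf F w := by
  unfold rootOf
  rw [SimpleGraph.ConnectedComponent.sound h]

variable [DecidableEq V]

noncomputable def pathTo (F : SimpleGraph V) (u : V) : F.Walk (rootOf F u) u :=
  (reachable_rootOf F u).some.bypass

lemma pathTo_isPath (F : SimpleGraph V) (u : V) : (pathTo F u).IsPath := bypass_isPath _

noncomputable def depth (F : SimpleGraph V) (u : V) : ℕ := (pathTo F u).length

lemma path_unique' {F : SimpleGraph V} (hF : F.IsAcyclic) {a b : V} {p q : F.Walk a b}
    (hp : p.IsPath) (hq : q.IsPath) : p = q := by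
  have := hF.path_unique ⟨p, hp⟩ ⟨q, hq⟩
  exact congrArg Subtype.val this

lemma length_eq_depth {F : SimpleGraph V} (hF : F.IsAcyclic) {u : V}
    (p : F.Walk (rootOf F u) u) (hp : p.IsPath) : p.length = depth F u := by
  rw [path_unique' hF hp (pathTo_isPath F u)]; rfl

lemma depth_add {F : SimpleGraph V} (hF : F.IsAcyclic) {u : V}
    (p : F.Walk (rootOf F u) u) (hp : p.IsPath) {w : V} (hw : w ∈ p.support) :
    depth F w + (p.dropUntil w hw).length = depth F u := by
  have hreach : F.Reachable w u := ⟨p.dropUntil w hw⟩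
  have hroot : rootOf F w = rootOf F u := rootOf_eq_of_reachable hreach
  have htk : ((p.takeUntil w hw).copy hroot.symm rfl).IsPath := by
    rw [isPath_copy]; exact hp.takeUntil hw
  have h1 : (p.takeUntil w hw).length = depth F w := by
    have := length_eq_depth hF _ htk
    simpa using this
  have h2 : (p.takeUntil w hw).length + (p.dropUntil w hw).length = p.length := by
    have := congrArg Walk.length (p.take_spec hw)
    rwa [length_append] at this
  rw [← h1, h2, length_eq_depth hF p hp]

lemma eq_of_depth_le {F : SimpleGraph V} (hF : F.IsAcyclic) {u : V}
    (p : F.Walk (rootOf F u) u) (hp : p.IsPath) {w : V} (hw : w ∈ p.support)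
    (h : depth F u ≤ depth F w) : w = u := by
  have h1 := depth_add hF p hp hw
  have h0 : (p.dropUntil w hw).length = 0 := by omega
  exact eq_of_length_eq_zero h0

lemma exists_subpath {G : SimpleGraph V} {a b u w : V} (p : G.Walk a b) (hp : p.IsPath)
    (hu : u ∈ p.support) (hw : w ∈ p.support) :
    ∃ q : G.Walk u w, q.IsPath ∧ ∀ x ∈ q.support, x ∈ p.support := by
  have hw' := hw
  rw [← p.take_spec hu] at hw'
  rw [mem_support_append_iff] at hw'
  rcases hw' with hw1 | hw2
  · refine ⟨((p.takeUntil u hu).dropUntil w hw1).reverse,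
      ((hp.takeUntil hu).dropUntil hw1).reverse, ?_⟩
    intro x hx
    rw [support_reverse, List.mem_reverse] at hx
    exact p.support_takeUntil_subset hu ((p.takeUntil u hu).support_dropUntil_subset hw1 hx)
  · refine ⟨(p.dropUntil u hu).takeUntil w hw2, (hp.dropUntil hu).takeUntil hw2, ?_⟩
    intro x hx
    exact p.support_dropUntil_subset hu ((p.dropUntil u hu).support_takeUntil_subset hw2 hx)

lemma ancestor {F : SimpleGraph V} (hF : F.IsAcyclic) {a b : V} (p : F.Walk a b)
    (hp : p.IsPath) {m y : V} (hm : m ∈ p.support) (hy : y ∈ p.support)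
    (hmin : ∀ w ∈ p.support, depth F m ≤ depth F w) : m ∈ (pathTo F y).support := by
  obtain ⟨q, hq, hqs⟩ := exists_subpath p hp hm hy
  have hr : rootOf F m = rootOf F y := rootOf_eq_of_reachable ⟨q⟩
  set pm := pathTo F m with hpm
  have hWp : (pm.append q).IsPath := by
    rw [isPath_def, support_append]
    refine List.Nodup.append ((pathTo_isPath F m).support_nodup)
      (((Walk.isPath_def q).mp hq).tail) ?_
    intro x hx1 hx2
    have hxq : x ∈ q.support := List.mem_of_mem_tail hx2
    have h1 : depth F m ≤ depth F x := hmin x (hqs x hxq)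
    have h2 : x = m := eq_of_depth_le hF pm (pathTo_isPath F m) hx1 h1
    rw [h2] at hx2
    have hcons : q.support = m :: q.support.tail := q.support_eq_cons
    have hnd := (Walk.isPath_def q).mp hq
    rw [hcons, List.nodup_cons] at hnd
    exact hnd.1 hx2
  have hWmem : m ∈ (pm.append q).support := by
    rw [mem_support_append_iff]; left; exact end_mem_support pm
  have hcopy : ((pm.append q).copy hr rfl).IsPath := by rwa [isPath_copy]
  have heq := path_unique' hF hcopy (pathTo_isPath F y)
  have hmem : m ∈ ((pm.append q).copy hr rfl).support := by rwa [support_copy]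
  rwa [heq] at hmem

lemma mem_support_closed_iff {G : SimpleGraph V} {u x : V} {c : G.Walk u u} (h : ¬c.Nil) :
    x ∈ c.support ↔ x ∈ c.support.tail := by
  cases c with
  | nil => simp at h
  | cons hadj p =>
    rw [support_cons, List.mem_cons]
    simp only [List.tail_cons]
    constructor
    · rintro (rfl | hx)
      · exact end_mem_support p
      · exact hx
    · exact fun hx => Or.inr hx


lemma mem_support_rotate_iff {G : SimpleGraph V} {u v x : V} {c : G.Walk u u}
    (hv : v ∈ c.support) (hc : c.IsCycle) :
    x ∈ (c.rotate v hv).support ↔ x ∈ c.support := by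
  have h1 : ¬c.Nil := hc.not_nil
  have h2 : ¬(c.rotate v hv).Nil := (hc.rotate hv).not_nil
  rw [mem_support_closed_iff h1, mem_support_closed_iff h2]
  exact (c.support_rotate v hv).mem_iff

lemma cycle_to_path (H : SimpleGraph V) (v : V) {u : V} (c : H.Walk u u) (hc : c.IsCycle)
    (hv : v ∈ c.support) :
    ∃ (a b : V) (q : (graphRestrict H {v}ᶜ).Walk a b), q.IsPath ∧ H.Adj v a ∧ H.Adj v b ∧
      a ≠ b ∧ (∀ x, x ∈ q.support ↔ x ∈ c.support ∧ x ≠ v) := by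
  set c2 := c.rotate v hv with hc2def
  have hc2 : c2.IsCycle := hc.rotate hv
  have hsupp : ∀ x, x ∈ c2.support ↔ x ∈ c.support := fun x => mem_support_rotate_iff hv hc
  clear_value c2
  cases c2 with
  | nil => exact absurd hc2 IsCycle.not_of_nil
  | cons hadj p =>
    rename_i a₀
    rw [Walk.cons_isCycle_iff] at hc2
    obtain ⟨hpp, hpe⟩ := hc2
    have hprp : p.reverse.IsPath := hpp.reverse
    -- p.reverse : Walk v a₀
    rcases hpr : p.reverse with _ | ⟨hadj2, p2⟩
    · exact absurd rfl (hadj.ne)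
    · rename_i b₀
      rw [hpr] at hprp
      rw [Walk.cons_isPath_iff] at hprp
      obtain ⟨hp2, hvp2⟩ := hprp
      -- p2 : Walk b₀ a₀, v ∉ p2.support
      have hvb : H.Adj v b₀ := hadj2
      have hva : H.Adj v a₀ := hadj
      -- support relation: p.support = p2.support.reverse ++ [v]
      have hps : p.support = p2.support.reverse ++ [v] := by
        have : p.reverse.support = v :: p2.support := by rw [hpr, support_cons]
        have h2 : p.support.reverse = v :: p2.support := by rwa [support_reverse] at this
        calc p.support = p.support.reverse.reverse := by rw [List.reverse_reverse]
        _ = (v :: p2.support).reverse := by rw [h2]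
        _ = p2.support.reverse ++ [v] := by simp
      have hab : a₀ ≠ b₀ := by
        intro hab
        subst hab
        have : p2 = Walk.nil := (Walk.isPath_iff_eq_nil (p := p2)).mp hp2
        rw [this] at hpr
        have hlen : p.length = 1 := by
          have h := congrArg Walk.length hpr
          rw [length_reverse] at h
          simpa using h
        have h3 := (hc.rotate hv).three_le_length
        rw [← hc2def] at h3
        rw [Walk.length_cons, hlen] at h3
        omega
      -- transfer p2 to restriction
      have hsup2 : ∀ x ∈ p2.support, x ∈ ({v}ᶜ : Set V) := by
        intro x hx
        simp only [Set.mem_compl_iff, Set.mem_singleton_iff]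
        intro hxv; rw [hxv] at hx; exact hvp2 hx
      have hedge : ∀ e ∈ p2.edges, e ∈ (graphRestrict H {v}ᶜ).edgeSet := by
        intro e he
        induction e with
        | h x y =>
          exact ⟨p2.adj_of_mem_edges he, hsup2 x (p2.fst_mem_support_of_mem_edges he),
            hsup2 y (p2.snd_mem_support_of_mem_edges he)⟩
      refine ⟨b₀, a₀, p2.transfer _ hedge, hp2.transfer hedge, hvb, hva, fun h => hab h.symm, ?_⟩
      intro x
      rw [support_transfer]
      rw [← hsupp x, support_cons, List.mem_cons, hps]
      simp only [List.mem_append, List.mem_reverse, List.mem_singleton]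
      constructor
      · intro hx
        have hxv : x ≠ v := fun h => hvp2 (h ▸ hx)
        exact ⟨Or.inr (Or.inl hx), hxv⟩
      · rintro ⟨(rfl | hx | rfl), hxv⟩
        · exact absurd rfl hxv
        · exact hx
        · exact absurd rfl hxv

lemma path_to_cycle (H : SimpleGraph V) (v : V) {a b : V}
    (q : (graphRestrict H {v}ᶜ).Walk a b) (hq : q.IsPath) (ha : H.Adj v a) (hb : H.Adj v b)
    (hab : a ≠ b) :
    ∃ c : H.Walk v v, c.IsCycle ∧ ∀ x, x ∈ c.support ↔ x = v ∨ x ∈ q.support := by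
  have hsup : ∀ x ∈ q.support, x ∈ ({v}ᶜ : Set V) :=
    support_mem_restrict q (by simp [ha.ne'])
  have hvq : v ∉ q.support := fun h => by simpa using hsup v h
  have hedge : ∀ e ∈ q.edges, e ∈ H.edgeSet := by
    intro e he
    induction e with
    | h x y => exact (q.adj_of_mem_edges he).1
  set qH := q.transfer H hedge with hqH
  have hqHs : qH.support = q.support := support_transfer _ _
  have hqHp : qH.IsPath := hq.transfer hedge
  have hcatp : (qH.concat hb.symm).IsPath := by
    have hrev : (qH.concat hb.symm).reverse = Walk.cons hb qH.reverse := reverse_concat _ _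
    have : (Walk.cons hb qH.reverse).IsPath := by
      rw [Walk.cons_isPath_iff]
      refine ⟨hqHp.reverse, ?_⟩
      rw [support_reverse, List.mem_reverse, hqHs]
      exact hvq
    have h2 : (qH.concat hb.symm).reverse.IsPath := hrev ▸ this
    have := h2.reverse
    rwa [reverse_reverse] at this
  refine ⟨Walk.cons ha (qH.concat hb.symm), ?_, ?_⟩
  · rw [Walk.cons_isCycle_iff]
    refine ⟨hcatp, ?_⟩
    rw [edges_concat, List.concat_eq_append, List.mem_append, List.mem_singleton]
    rintro (h1 | h2)
    · have := qH.fst_mem_support_of_mem_edges h1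
      rw [hqHs] at this
      exact hvq this
    · rw [Sym2.eq_iff] at h2
      rcases h2 with ⟨h3, h4⟩ | ⟨h3, h4⟩
      · exact hb.ne' h3.symm
      · exact hab h4
  · intro x
    rw [support_cons, List.mem_cons, support_concat, hqHs,
      List.mem_append, List.mem_singleton]
    constructor
    · rintro (rfl | hx | rfl) <;> simp [*]
    · rintro (rfl | hx)
      · exact Or.inl rfl
      · exact Or.inr (Or.inl hx)

lemma key_lemma [Fintype V] (H : SimpleGraph V) (v : V)
    (hF : (graphRestrict H {v}ᶜ).IsAcyclic) (hnc : ¬H.IsAcyclic) :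
    ∃ c : H.Walk v v, c.IsCycle ∧ ∃ x, x ∈ c.support ∧ x ≠ v ∧
      ∀ (u : V) (c' : H.Walk u u), c'.IsCycle →
        (∃ y, y ∈ c'.support ∧ y ≠ v ∧ y ∈ c.support) → x ∈ c'.support := by
  set F := graphRestrict H {v}ᶜ with hFdef
  have hvmem : ∀ (u : V) (c : H.Walk u u), c.IsCycle → v ∈ c.support := by
    intro u c hc
    by_contra hv
    have hsup : ∀ x ∈ c.support, x ∈ ({v}ᶜ : Set V) := by
      intro x hx
      simp only [Set.mem_compl_iff, Set.mem_singleton_iff]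
      rintro rfl; exact hv hx
    have hedge : ∀ e ∈ c.edges, e ∈ F.edgeSet := by
      intro e he
      induction e with
      | h x y =>
        exact ⟨c.adj_of_mem_edges he, hsup x (c.fst_mem_support_of_mem_edges he),
          hsup y (c.snd_mem_support_of_mem_edges he)⟩
    exact hF (c.transfer F hedge) (hc.transfer hedge)
  have get : ∀ (u : V) (c' : H.Walk u u), c'.IsCycle →
      ∃ (a b : V) (q : F.Walk a b) (m : V), q.IsPath ∧ H.Adj v a ∧ H.Adj v b ∧ a ≠ b ∧
        (∀ x, x ∈ q.support ↔ x ∈ c'.support ∧ x ≠ v) ∧ m ∈ q.support ∧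
        (∀ w ∈ q.support, depth F m ≤ depth F w) := by
    intro u c' hc'
    obtain ⟨a, b, q, hq, ha, hb, hab, hiff⟩ := cycle_to_path H v c' hc' (hvmem u c' hc')
    obtain ⟨m, hm⟩ : ∃ m, m ∈ q.support.argmin (depth F) := by
      cases hopt : q.support.argmin (depth F) with
      | none => exact absurd (List.argmin_eq_none.mp hopt) q.support_ne_nil
      | some m => exact ⟨m, by simp [hopt, Option.mem_def]⟩
    exact ⟨a, b, q, m, hq, ha, hb, hab, hiff, List.argmin_mem hm,
      fun w hw => List.le_of_mem_argmin hw hm⟩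
  unfold SimpleGraph.IsAcyclic at hnc
  push_neg at hnc
  obtain ⟨u0, c0, hc0⟩ := hnc
  set NS : Set ℕ := {n | ∃ (a b : V) (q : F.Walk a b) (m : V), q.IsPath ∧ H.Adj v a ∧
    H.Adj v b ∧ a ≠ b ∧ m ∈ q.support ∧ (∀ w ∈ q.support, depth F m ≤ depth F w) ∧
    n = depth F m} with hNSdef
  have hne : NS.Nonempty := by
    obtain ⟨a, b, q, m, hq, ha, hb, hab, _, hmq, hmin⟩ := get u0 c0 hc0
    exact ⟨depth F m, a, b, q, m, hq, ha, hb, hab, hmq, hmin, rfl⟩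
  have hbdd : BddAbove NS := by
    refine ⟨Fintype.card V, fun n hn => ?_⟩
    obtain ⟨a, b, q, m, _, _, _, _, _, _, rfl⟩ := hn
    exact le_of_lt ((pathTo_isPath F m).length_lt)
  have hmax := Nat.sSup_mem hne hbdd
  obtain ⟨a, b, q, m, hq, ha, hb, hab, hmq, hmin, hsup_eq⟩ := hmax
  have hub : ∀ n ∈ NS, n ≤ depth F m := fun n hn => hsup_eq ▸ le_csSup hbdd hn
  obtain ⟨c, hcyc, hciff⟩ := path_to_cycle H v q hq ha hb hab
  have hmnv : m ≠ v := by
    have := support_mem_restrict q (by simp [ha.ne'] : a ∈ ({v}ᶜ : Set V)) m hmq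
    simpa using this
  refine ⟨c, hcyc, m, (hciff m).mpr (Or.inr hmq), hmnv, ?_⟩
  rintro u c' hc' ⟨y, hyc', hyv, hyc⟩
  obtain ⟨a', b', q', m', hq', ha', hb', hab', hiff', hm'q', hmin'⟩ := get u c' hc'
  have hyq' : y ∈ q'.support := (hiff' y).mpr ⟨hyc', hyv⟩
  have hyq : y ∈ q.support := by
    rcases (hciff y).mp hyc with rfl | h
    · exact absurd rfl hyv
    · exact h
  have hle : depth F m' ≤ depth F m :=
    hub (depth F m') ⟨a', b', q', m', hq', ha', hb', hab', hm'q', hmin', rfl⟩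
  have hmy : m ∈ (pathTo F y).support := ancestor hF q hq hmq hyq hmin
  have hm'y : m' ∈ (pathTo F y).support := ancestor hF q' hq' hm'q' hyq' hmin'
  suffices hmq' : m ∈ q'.support by exact ((hiff' m).mp hmq').1
  set ry := pathTo F y with hrydef
  have hsplit := hmy
  rw [← ry.take_spec hm'y, mem_support_append_iff] at hsplit
  rcases hsplit with h1 | h2
  · have hroot : rootOf F m' = rootOf F y := rootOf_eq_of_reachable ⟨ry.dropUntil m' hm'y⟩
    have htkp : ((ry.takeUntil m' hm'y).copy hroot.symm rfl).IsPath := by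
      rw [isPath_copy]; exact (pathTo_isPath F y).takeUntil hm'y
    have hmem : m ∈ ((ry.takeUntil m' hm'y).copy hroot.symm rfl).support := by
      rwa [support_copy]
    have heq : m = m' := eq_of_depth_le hF _ htkp hmem hle
    rw [heq]; exact hm'q'
  · obtain ⟨q'', hq'', hq''s⟩ := exists_subpath q' hq' hm'q' hyq'
    have hdp : (ry.dropUntil m' hm'y).IsPath := (pathTo_isPath F y).dropUntil hm'y
    have heq2 : q'' = ry.dropUntil m' hm'y := path_unique' hF hq'' hdp
    apply hq''s
    rw [heq2]; exact h2


lemma graphRestrict_restrict (G : SimpleGraph V) (A B : Set V) :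
    graphRestrict (graphRestrict G A) B = graphRestrict G (A ∩ B) := by
  ext u w
  constructor
  · rintro ⟨⟨h, ha1, ha2⟩, hb1, hb2⟩
    exact ⟨h, ⟨ha1, hb1⟩, ⟨ha2, hb2⟩⟩
  · rintro ⟨h, ⟨ha1, hb1⟩, ⟨ha2, hb2⟩⟩
    exact ⟨⟨h, ha1, ha2⟩, hb1, hb2⟩

lemma main_aux {V : Type*} [DecidableEq V] [Fintype V] (G : SimpleGraph V) (v : V) :
    ∀ (n : ℕ) (S : Set V), S.ncard ≤ n → v ∈ S →
      (graphRestrict G (S \ {v})).IsAcyclic →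
      ∃ X : Set V, X ⊆ S \ {v} ∧ (graphRestrict G (S \ X)).IsAcyclic ∧
        HasFlower (graphRestrict G S) v X.ncard := by
  intro n
  induction n with
  | zero =>
    intro S hS hv _
    have : 0 < S.ncard := (Set.ncard_pos (Set.toFinite S)).mpr ⟨v, hv⟩
    omega
  | succ n ih =>
    intro S hS hv hac
    by_cases hGac : (graphRestrict G S).IsAcyclic
    · refine ⟨∅, Set.empty_subset _, by simpa using hGac, ?_⟩
      rw [Set.ncard_empty]
      exact ⟨fun i => i.elim0, fun i => i.elim0, fun i j _ => i.elim0⟩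
    · have hF : (graphRestrict (graphRestrict G S) {v}ᶜ).IsAcyclic := by
        rw [graphRestrict_restrict, ← Set.diff_eq]
        exact hac
      obtain ⟨c, hcyc, x, hxc, hxv, hkey⟩ := key_lemma (graphRestrict G S) v hF hGac
      set D : Set V := {y | y ∈ c.support ∧ y ≠ v} with hDdef
      have hsubS : ∀ z ∈ c.support, z ∈ S := support_mem_restrict c hv
      set S' := S \ D with hS'def
      have hxD : x ∈ D := ⟨hxc, hxv⟩
      have hxS' : x ∉ S' := fun h => h.2 hxD
      have hss : S' ⊂ S := by
        rw [Set.ssubset_def]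
        exact ⟨Set.diff_subset, fun hcon => hxS' (hcon (hsubS x hxc))⟩
      have hlt : S'.ncard < S.ncard := Set.ncard_lt_ncard hss (Set.toFinite S)
      have hv' : v ∈ S' := ⟨hv, fun h => h.2 rfl⟩
      have hac' : (graphRestrict G (S' \ {v})).IsAcyclic :=
        isAcyclic_anti (graphRestrict_mono G (Set.diff_subset_diff_left Set.diff_subset)) hac
      obtain ⟨X', hX'sub, hX'ac, f, hf1, hf2⟩ := ih S' (by omega) hv' hac'
      have hxX' : x ∉ X' := fun h => (hX'sub h).1.2 hxD
      set X : Set V := insert x X' with hXdef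
      have hcard : X.ncard = X'.ncard + 1 := Set.ncard_insert_of_notMem hxX' (Set.toFinite X')
      have hX'S : X' ⊆ S \ {v} := fun z hz =>
        ⟨(hX'sub hz).1.1, (hX'sub hz).2⟩
      refine ⟨X, ?_, ?_, ?_⟩
      · exact Set.insert_subset ⟨hsubS x hxc, hxv⟩ hX'S
      · intro u c'' hc''
        have hu : u ∈ S \ X := cycle_start_mem_restrict hc''
        have hsupp'' : ∀ z ∈ c''.support, z ∈ S \ X := support_mem_restrict c'' hu
        by_cases hmeet : ∃ y ∈ c''.support, y ∈ D
        · obtain ⟨y, hy1, hy2⟩ := hmeet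
          have hedge : ∀ e ∈ c''.edges, e ∈ (graphRestrict G S).edgeSet :=
            edges_mem_restrict c'' (fun z hz => (hsupp'' z hz).1)
          have hxmem := hkey u (c''.transfer _ hedge) (hc''.transfer hedge)
            ⟨y, by rw [support_transfer]; exact hy1, hy2.2, hy2.1⟩
          rw [support_transfer] at hxmem
          exact (hsupp'' x hxmem).2 (Set.mem_insert x X')
        · push_neg at hmeet
          have hsub2 : ∀ z ∈ c''.support, z ∈ S' \ X' := fun z hz =>
            ⟨⟨(hsupp'' z hz).1, hmeet z hz⟩,
              fun h => (hsupp'' z hz).2 (Set.mem_insert_of_mem _ h)⟩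
          have hedge := edges_mem_restrict c'' hsub2
          exact hX'ac (c''.transfer _ hedge) (hc''.transfer hedge)
      · rw [hcard]
        have hsupf : ∀ i, ∀ z ∈ (f i).support, z ∈ S' := fun i => support_mem_restrict (f i) hv'
        have hedgef : ∀ i, ∀ e ∈ (f i).edges, e ∈ (graphRestrict G S).edgeSet := fun i =>
          edges_mem_restrict (f i) (fun z hz => (hsupf i z hz).1)
        set g : Fin (X'.ncard + 1) → (graphRestrict G S).Walk v v :=
          Fin.cons c (fun i => (f i).transfer _ (hedgef i)) with hgdef
        have hg0 : g 0 = c := rfl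
        have hgs : ∀ i : Fin X'.ncard, g i.succ = (f i).transfer _ (hedgef i) := fun i =>
          Fin.cons_succ _ _ i
        have hmix : ∀ j : Fin X'.ncard,
            {z | z ∈ c.support} ∩ {z | z ∈ ((f j).transfer _ (hedgef j)).support} = {v} := by
          intro j
          ext z
          simp only [Set.mem_inter_iff, Set.mem_setOf_eq, Set.mem_singleton_iff,
            support_transfer]
          constructor
          · rintro ⟨hz1, hz2⟩
            by_contra hzv
            exact (hsupf j z hz2).2 ⟨hz1, hzv⟩
          · rintro rfl
            exact ⟨c.start_mem_support, (f j).start_mem_support⟩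
        refine ⟨g, ?_, ?_⟩
        · intro i
          refine Fin.cases ?_ ?_ i
          · exact hcyc
          · intro i'
            rw [hgs]
            exact (hf1 i').transfer _
        · intro i j hij
          rcases Fin.eq_zero_or_eq_succ i with rfl | ⟨i', rfl⟩ <;>
            rcases Fin.eq_zero_or_eq_succ j with rfl | ⟨j', rfl⟩
          · exact absurd rfl hij
          · rw [hg0, hgs]
            exact hmix j'
          · rw [hg0, hgs, Set.inter_comm]
            exact hmix i'
          · rw [hgs, hgs]
            have hij' : i' ≠ j' := fun h => hij (by rw [h])
            have h2 := hf2 i' j' hij'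
            simpa only [support_transfer] using h2

end myaux

theorem stmt12 [Fintype V] (G : SimpleGraph V) (v : V)
    (h : (graphRestrict G {v}ᶜ).IsAcyclic) :
    ∃ X : Set V, X ⊆ {v}ᶜ ∧ (graphRestrict G Xᶜ).IsAcyclic ∧ HasFlower G v X.ncard := by
  classical
  have hac : (graphRestrict G (Set.univ \ {v})).IsAcyclic := by
    rwa [← Set.compl_eq_univ_diff]
  obtain ⟨X, hX1, hX2, hX3⟩ :=
    main_aux G v (Set.ncard (Set.univ : Set V)) Set.univ le_rfl (Set.mem_univ v) hac
  refine ⟨X, ?_, ?_, ?_⟩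
  · rwa [Set.compl_eq_univ_diff]
  · rwa [Set.compl_eq_univ_diff]
  · rwa [graphRestrict_univ] at hX3
end
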